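/- arXiv:1910.07817 — 4 statements merged into one kernel-verified Lean document; each statement's English description precedes it below -/
import Mathlib

section
/- Let $\hat\Sigma \in \mathbb{S}^n_{++}$, $\rho \ge 0$, and let $\Sigma \in \mathbb{S}^n_{++}$ satisfy $\frac{1}{\sqrt 2}\|\log(\hat\Sigma^{-1/2}\Sigma\hat\Sigma^{-1/2})\|_F \le \rho$. Then $\lambda_{\min}(\hat\Sigma)\, e^{-\sqrt 2 \rho}\, I_n \preceq \Sigma \preceq \lambda_{\max}(\hat\Sigma)\, e^{\sqrt 2 \rho}\, I_n$. -/
open Matrix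

variable {n : ℕ}

/-- Apply a real function spectrally to a (hermitian) matrix. -/
noncomputable def matFun (f : ℝ → ℝ) (A : Matrix (Fin n) (Fin n) ℝ) :
    Matrix (Fin n) (Fin n) ℝ :=
  if h : A.IsHermitian then
    (h.eigenvectorUnitary : Matrix (Fin n) (Fin n) ℝ) *
      Matrix.diagonal (fun i => f (h.eigenvalues i)) *
      star (h.eigenvectorUnitary : Matrix (Fin n) (Fin n) ℝ)
  else 0

/-- Matrix logarithm (spectral). -/
noncomputable def matLog (A : Matrix (Fin n) (Fin n) ℝ) : Matrix (Fin n) (Fin n) ℝ :=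
  matFun Real.log A

/-- Matrix real power (spectral). -/
noncomputable def matPow (A : Matrix (Fin n) (Fin n) ℝ) (t : ℝ) : Matrix (Fin n) (Fin n) ℝ :=
  matFun (fun x => x ^ t) A

/-- The unique positive semidefinite square root (spectral). -/
noncomputable def matSqrt (A : Matrix (Fin n) (Fin n) ℝ) : Matrix (Fin n) (Fin n) ℝ :=
  matFun Real.sqrt A

/-- Frobenius norm. -/
noncomputable def frob (A : Matrix (Fin n) (Fin n) ℝ) : ℝ :=
  Real.sqrt (∑ i, ∑ j, (A i j) ^ 2)

/-- Fisher-Rao distance between positive definite matrices. -/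
noncomputable def FRdist (A B : Matrix (Fin n) (Fin n) ℝ) : ℝ :=
  (1 / Real.sqrt 2) * frob (matLog ((matSqrt B)⁻¹ * A * (matSqrt B)⁻¹))

section Helpers

variable {A B : Matrix (Fin n) (Fin n) ℝ}

lemma aux_spectral (hA : A.IsHermitian) :
    A = (hA.eigenvectorUnitary : Matrix (Fin n) (Fin n) ℝ) *
      Matrix.diagonal hA.eigenvalues * star (hA.eigenvectorUnitary : Matrix (Fin n) (Fin n) ℝ) := by
  simpa using hA.spectral_theorem

lemma conj_smul_one (U : Matrix (Fin n) (Fin n) ℝ) (hU : U * star U = 1) (c : ℝ) :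
    U * (c • (1 : Matrix (Fin n) (Fin n) ℝ)) * star U = c • 1 := by
  rw [Matrix.mul_smul, Matrix.mul_one, Matrix.smul_mul, hU]

lemma psd_of_eig_ge (hA : A.IsHermitian) {c : ℝ} (h : ∀ i, c ≤ hA.eigenvalues i) :
    (A - c • 1).PosSemidef := by
  set U := (hA.eigenvectorUnitary : Matrix (Fin n) (Fin n) ℝ) with hUdef
  have hU : U * star U = 1 := mem_unitaryGroup_iff.mp hA.eigenvectorUnitary.2
  have key : A - c • 1 = U * Matrix.diagonal (fun i => hA.eigenvalues i - c) * star U := by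
    have hds : Matrix.diagonal (fun i => hA.eigenvalues i - c)
        = Matrix.diagonal hA.eigenvalues - c • (1 : Matrix (Fin n) (Fin n) ℝ) := by
      rw [smul_one_eq_diagonal, ← Matrix.diagonal_sub]
    rw [hds, Matrix.mul_sub, Matrix.sub_mul, conj_smul_one U hU, ← aux_spectral hA]
  rw [key, Matrix.star_eq_conjTranspose U]
  exact Matrix.PosSemidef.mul_mul_conjTranspose_same
    (Matrix.posSemidef_diagonal_iff.mpr (fun i => sub_nonneg.mpr (h i))) U

lemma psd_of_eig_le (hA : A.IsHermitian) {c : ℝ} (h : ∀ i, hA.eigenvalues i ≤ c) :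
    (c • 1 - A).PosSemidef := by
  set U := (hA.eigenvectorUnitary : Matrix (Fin n) (Fin n) ℝ) with hUdef
  have hU : U * star U = 1 := mem_unitaryGroup_iff.mp hA.eigenvectorUnitary.2
  have key : c • 1 - A = U * Matrix.diagonal (fun i => c - hA.eigenvalues i) * star U := by
    have hds : Matrix.diagonal (fun i => c - hA.eigenvalues i)
        = c • (1 : Matrix (Fin n) (Fin n) ℝ) - Matrix.diagonal hA.eigenvalues := by
      rw [smul_one_eq_diagonal, ← Matrix.diagonal_sub]
    rw [hds, Matrix.mul_sub, Matrix.sub_mul, conj_smul_one U hU, ← aux_spectral hA]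
  rw [key, Matrix.star_eq_conjTranspose U]
  exact Matrix.PosSemidef.mul_mul_conjTranspose_same
    (Matrix.posSemidef_diagonal_iff.mpr (fun i => sub_nonneg.mpr (h i))) U

lemma posDef_conj (hA : A.PosDef) (hB : IsUnit B.det) : (Bᴴ * A * B).PosDef := by
  rw [Matrix.posDef_iff_dotProduct_mulVec]
  refine ⟨Matrix.isHermitian_conjTranspose_mul_mul B hA.1, fun x hx => ?_⟩
  have hBx : B *ᵥ x ≠ 0 := by
    intro h
    apply hx
    have h2 := congrArg (fun v => B⁻¹ *ᵥ v) h
    simpa [Matrix.mulVec_mulVec, Matrix.nonsing_inv_mul B hB] using h2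
  simpa only [star_mulVec, Matrix.dotProduct_mulVec, Matrix.vecMul_vecMul] using (Matrix.posDef_iff_dotProduct_mulVec.mp hA).2 (x := B *ᵥ x) hBx

lemma psd_smul (hA : A.PosSemidef) {c : ℝ} (hc : 0 ≤ c) : (c • A).PosSemidef := by
  rw [Matrix.posSemidef_iff_dotProduct_mulVec]
  refine ⟨?_, fun x => ?_⟩
  · unfold Matrix.IsHermitian
    rw [Matrix.conjTranspose_smul, hA.1.eq]
    simp
  · rw [Matrix.smul_mulVec, dotProduct_smul]
    exact mul_nonneg hc ((Matrix.posSemidef_iff_dotProduct_mulVec.mp hA).2 x)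

lemma matFun_eq (hA : A.IsHermitian) (f : ℝ → ℝ) :
    matFun f A = (hA.eigenvectorUnitary : Matrix (Fin n) (Fin n) ℝ) *
      Matrix.diagonal (fun i => f (hA.eigenvalues i)) *
      star (hA.eigenvectorUnitary : Matrix (Fin n) (Fin n) ℝ) := by
  rw [matFun, dif_pos hA]

lemma frob_unitary_diag (U : Matrix (Fin n) (Fin n) ℝ) (hU : star U * U = 1) (d : Fin n → ℝ) :
    frob (U * Matrix.diagonal d * star U) = Real.sqrt (∑ i, d i ^ 2) := by
  set X := U * Matrix.diagonal d * star U with hX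
  have hXH : Xᴴ = X := by
    rw [hX]
    simp only [Matrix.conjTranspose_mul, Matrix.star_eq_conjTranspose,
      Matrix.conjTranspose_conjTranspose, Matrix.diagonal_conjTranspose, star_trivial]
    rw [Matrix.mul_assoc]
  have hXX : X * X = U * Matrix.diagonal (fun i => d i * d i) * star U := by
    rw [hX]
    calc (U * Matrix.diagonal d * star U) * (U * Matrix.diagonal d * star U)
        = U * Matrix.diagonal d * (star U * U) * (Matrix.diagonal d * star U) := by
          simp only [Matrix.mul_assoc]
      _ = U * (Matrix.diagonal d * Matrix.diagonal d) * star U := by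
          rw [hU]; simp only [Matrix.mul_one, Matrix.mul_assoc]
      _ = _ := by rw [Matrix.diagonal_mul_diagonal]
  have htr : (X * X).trace = ∑ i, d i ^ 2 := by
    rw [hXX, Matrix.trace_mul_cycle, hU, Matrix.one_mul, Matrix.trace_diagonal]
    simp [sq]
  have hsum : ∑ i, ∑ j, (X i j) ^ 2 = (X * X).trace := by
    rw [Matrix.trace]
    simp only [Matrix.diag, Matrix.mul_apply]
    refine Finset.sum_congr rfl fun i _ => Finset.sum_congr rfl fun j _ => ?_
    have hji : X j i = X i j := by
      conv_lhs => rw [← hXH]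
      simp [Matrix.conjTranspose_apply]
    rw [hji, sq]
  rw [frob, hsum, htr]

lemma matSqrt_hermitian (hA : A.IsHermitian) : (matSqrt A).IsHermitian := by
  rw [matSqrt, matFun_eq hA]
  simp only [Matrix.star_eq_conjTranspose]
  exact Matrix.isHermitian_mul_mul_conjTranspose _ (Matrix.isHermitian_diagonal _)

lemma matSqrt_mul_self (hA : A.PosDef) : matSqrt A * matSqrt A = A := by
  rw [matSqrt, matFun_eq hA.1]
  set U := (hA.1.eigenvectorUnitary : Matrix (Fin n) (Fin n) ℝ)
  have hU : star U * U = 1 := mem_unitaryGroup_iff'.mp hA.1.eigenvectorUnitary.2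
  calc (U * Matrix.diagonal (fun i => Real.sqrt (hA.1.eigenvalues i)) * star U) *
        (U * Matrix.diagonal (fun i => Real.sqrt (hA.1.eigenvalues i)) * star U)
      = U * Matrix.diagonal (fun i => Real.sqrt (hA.1.eigenvalues i)) * (star U * U) *
        (Matrix.diagonal (fun i => Real.sqrt (hA.1.eigenvalues i)) * star U) := by
        simp only [Matrix.mul_assoc]
    _ = U * (Matrix.diagonal (fun i => Real.sqrt (hA.1.eigenvalues i)) *
        Matrix.diagonal (fun i => Real.sqrt (hA.1.eigenvalues i))) * star U := by
        rw [hU]; simp only [Matrix.mul_one, Matrix.mul_assoc]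
    _ = U * Matrix.diagonal hA.1.eigenvalues * star U := by
        rw [Matrix.diagonal_mul_diagonal]
        have hfun : (fun i => Real.sqrt (hA.1.eigenvalues i) * Real.sqrt (hA.1.eigenvalues i))
            = hA.1.eigenvalues :=
          funext fun i => Real.mul_self_sqrt (hA.eigenvalues_pos i).le
        rw [hfun]
    _ = A := (aux_spectral hA.1).symm

lemma matSqrt_posDef (hA : A.PosDef) : (matSqrt A).PosDef := by
  rw [matSqrt, matFun_eq hA.1]
  set U := (hA.1.eigenvectorUnitary : Matrix (Fin n) (Fin n) ℝ)
  have hU : star U * U = 1 := mem_unitaryGroup_iff'.mp hA.1.eigenvectorUnitary.2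
  have hDef : Matrix.PosDef (Matrix.diagonal (fun i => Real.sqrt (hA.1.eigenvalues i))) :=
    Matrix.posDef_diagonal_iff.mpr fun i => Real.sqrt_pos.mpr (hA.eigenvalues_pos i)
  have hdet : IsUnit (star U).det := by
    refine IsUnit.of_mul_eq_one U.det ?_
    rw [← Matrix.det_mul, hU, Matrix.det_one]
  have h2 := posDef_conj hDef hdet
  simpa only [Matrix.star_eq_conjTranspose, Matrix.conjTranspose_conjTranspose] using h2

end Helpers

theorem fr_ball_loewner_bounds (Sh Sig : Matrix (Fin n) (Fin n) ℝ) (ρ : ℝ)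
    (hρ : 0 ≤ ρ) (hSh : Sh.PosDef) (hSig : Sig.PosDef)
    (hd : FRdist Sig Sh ≤ ρ) :
    (Sig - ((⨅ i, hSh.1.eigenvalues i) * Real.exp (-(Real.sqrt 2 * ρ))) •
        (1 : Matrix (Fin n) (Fin n) ℝ)).PosSemidef ∧
    (((⨆ i, hSh.1.eigenvalues i) * Real.exp (Real.sqrt 2 * ρ)) •
        (1 : Matrix (Fin n) (Fin n) ℝ) - Sig).PosSemidef := by
  set B := matSqrt Sh with hBdef
  have hBpd : B.PosDef := matSqrt_posDef hSh
  have hBH : B.IsHermitian := hBpd.1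
  have hBB : B * B = Sh := matSqrt_mul_self hSh
  have hBdet : IsUnit B.det := isUnit_iff_ne_zero.mpr hBpd.det_pos.ne'
  have hBi : B * B⁻¹ = 1 := Matrix.mul_nonsing_inv B hBdet
  have hBi' : B⁻¹ * B = 1 := Matrix.nonsing_inv_mul B hBdet
  have hBidet : IsUnit (B⁻¹).det := IsUnit.of_mul_eq_one B.det (by rw [← Matrix.det_mul, hBi', Matrix.det_one])
  set M := B⁻¹ * Sig * B⁻¹ with hMdef
  have hBiH : (B⁻¹)ᴴ = B⁻¹ := by
    rw [Matrix.conjTranspose_nonsing_inv, hBH.eq]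
  have hM : M.PosDef := by
    have := posDef_conj hSig hBidet
    rwa [hBiH] at this
  have hMH : M.IsHermitian := hM.1
  -- eigenvalue bounds for M
  have hfrob : frob (matLog M) = Real.sqrt (∑ i, Real.log (hMH.eigenvalues i) ^ 2) := by
    rw [matLog, matFun_eq hMH]
    exact frob_unitary_diag _ (mem_unitaryGroup_iff'.mp hMH.eigenvectorUnitary.2) _
  have hs2 : (0:ℝ) < Real.sqrt 2 := Real.sqrt_pos.mpr (by norm_num)
  have hfle : Real.sqrt (∑ i, Real.log (hMH.eigenvalues i) ^ 2) ≤ Real.sqrt 2 * ρ := by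
    have := hd
    simp only [FRdist] at this
    rw [← hBdef, ← hMdef, hfrob] at this
    have h2 := mul_le_mul_of_nonneg_left this hs2.le
    rwa [← mul_assoc, mul_one_div, div_self hs2.ne', one_mul] at h2
  have hsum_le : ∑ i, Real.log (hMH.eigenvalues i) ^ 2 ≤ (Real.sqrt 2 * ρ) ^ 2 := by
    have hnn : 0 ≤ ∑ i, Real.log (hMH.eigenvalues i) ^ 2 :=
      Finset.sum_nonneg fun i _ => sq_nonneg _
    rw [← Real.sq_sqrt hnn]
    exact pow_le_pow_left₀ (Real.sqrt_nonneg _) hfle 2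
  have habs : ∀ i, |Real.log (hMH.eigenvalues i)| ≤ Real.sqrt 2 * ρ := by
    intro i
    have h1 : Real.log (hMH.eigenvalues i) ^ 2 ≤ (Real.sqrt 2 * ρ) ^ 2 :=
      le_trans (Finset.single_le_sum (fun j _ => sq_nonneg (Real.log (hMH.eigenvalues j)))
        (Finset.mem_univ i)) hsum_le
    have h2 := Real.sqrt_le_sqrt h1
    rwa [Real.sqrt_sq_eq_abs, Real.sqrt_sq (mul_nonneg hs2.le hρ)] at h2
  have hμpos : ∀ i, 0 < hMH.eigenvalues i := hM.eigenvalues_pos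
  have hlow : ∀ i, Real.exp (-(Real.sqrt 2 * ρ)) ≤ hMH.eigenvalues i := by
    intro i
    have := (abs_le.mp (habs i)).1
    calc Real.exp (-(Real.sqrt 2 * ρ)) ≤ Real.exp (Real.log (hMH.eigenvalues i)) :=
          Real.exp_le_exp.mpr this
      _ = hMH.eigenvalues i := Real.exp_log (hμpos i)
  have hhigh : ∀ i, hMH.eigenvalues i ≤ Real.exp (Real.sqrt 2 * ρ) := by
    intro i
    have := (abs_le.mp (habs i)).2
    calc hMH.eigenvalues i = Real.exp (Real.log (hMH.eigenvalues i)) :=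
          (Real.exp_log (hμpos i)).symm
      _ ≤ Real.exp (Real.sqrt 2 * ρ) := Real.exp_le_exp.mpr this
  have hMlow : (M - Real.exp (-(Real.sqrt 2 * ρ)) • 1).PosSemidef := psd_of_eig_ge hMH hlow
  have hMhigh : (Real.exp (Real.sqrt 2 * ρ) • 1 - M).PosSemidef := psd_of_eig_le hMH hhigh
  have hShlow : (Sh - (⨅ i, hSh.1.eigenvalues i) • 1).PosSemidef :=
    psd_of_eig_ge hSh.1 fun i => ciInf_le (Finite.bddBelow_range _) i
  have hShhigh : ((⨆ i, hSh.1.eigenvalues i) • 1 - Sh).PosSemidef :=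
    psd_of_eig_le hSh.1 fun i => le_ciSup (Finite.bddAbove_range _) i
  have hBMB : B * M * B = Sig := by
    rw [hMdef, ← Matrix.mul_assoc, ← Matrix.mul_assoc, hBi, Matrix.one_mul,
      Matrix.mul_assoc, hBi', Matrix.mul_one]
  constructor
  · have key : Sig - ((⨅ i, hSh.1.eigenvalues i) * Real.exp (-(Real.sqrt 2 * ρ))) • 1
        = B * (M - Real.exp (-(Real.sqrt 2 * ρ)) • 1) * B
          + Real.exp (-(Real.sqrt 2 * ρ)) • (Sh - (⨅ i, hSh.1.eigenvalues i) • 1) := by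
      rw [Matrix.mul_sub, Matrix.sub_mul, hBMB, Matrix.mul_smul, Matrix.mul_one,
        Matrix.smul_mul, hBB, smul_sub, smul_smul, sub_add_sub_cancel, mul_comm]
    rw [key]
    refine Matrix.PosSemidef.add ?_ (psd_smul hShlow (Real.exp_pos _).le)
    have h := hMlow.mul_mul_conjTranspose_same B
    rwa [hBH.eq] at h
  · have key2 : ((⨆ i, hSh.1.eigenvalues i) * Real.exp (Real.sqrt 2 * ρ)) • 1 - Sig
        = Real.exp (Real.sqrt 2 * ρ) • ((⨆ i, hSh.1.eigenvalues i) • 1 - Sh)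
          + B * (Real.exp (Real.sqrt 2 * ρ) • 1 - M) * B := by
      rw [Matrix.mul_sub, Matrix.sub_mul, hBMB, Matrix.mul_smul, Matrix.mul_one,
        Matrix.smul_mul, hBB, smul_sub, smul_smul, sub_add_sub_cancel, mul_comm]
    rw [key2]
    refine Matrix.PosSemidef.add (psd_smul hShhigh (Real.exp_pos _).le) ?_
    have h := hMhigh.mul_mul_conjTranspose_same B
    rwa [hBH.eq] at h
end

section
/- Let $\hat\Sigma \in \mathbb{S}^n_{++}$, $S \in \mathbb{S}^n_+$ and $\rho \ge 0$. The function $L(\Sigma) = \mathrm{Tr}(S\Sigma^{-1}) + \log\det\Sigma$ attains its minimum over the Fisher-Rao ball $\mathcal{B} = \{\Sigma \in \mathbb{S}^n_{++} : \frac{1}{\sqrt 2}\|\log(\hat\Sigma^{-1/2}\Sigma\hat\Sigma^{-1/2})\|_F \le \rho\}$; in particular, the minimum is finite and achieved at some $\Sigma^\star \in \mathcal{B}$. -/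
open Matrix

variable {n : ℕ}

namespace FRaux

/-- Spectral theorem, real form. -/
lemma spectral' {A : Matrix (Fin n) (Fin n) ℝ} (hA : A.IsHermitian) :
    A = (hA.eigenvectorUnitary : Matrix (Fin n) (Fin n) ℝ) *
      Matrix.diagonal (fun i => hA.eigenvalues i) *
      star (hA.eigenvectorUnitary : Matrix (Fin n) (Fin n) ℝ) := by
  conv_lhs => rw [hA.spectral_theorem]
  simp [RCLike.ofReal_real_eq_id, Function.comp_def]

lemma matFun_eq {A : Matrix (Fin n) (Fin n) ℝ} (hA : A.IsHermitian) (f : ℝ → ℝ) :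
    matFun f A = (hA.eigenvectorUnitary : Matrix (Fin n) (Fin n) ℝ) *
      Matrix.diagonal (fun i => f (hA.eigenvalues i)) *
      star (hA.eigenvectorUnitary : Matrix (Fin n) (Fin n) ℝ) := by
  rw [matFun, dif_pos hA]

lemma diag_comm {W : Matrix (Fin n) (Fin n) ℝ} {d e : Fin n → ℝ}
    (h : W * Matrix.diagonal d = Matrix.diagonal e * W) (f : ℝ → ℝ) :
    W * Matrix.diagonal (fun i => f (d i)) = Matrix.diagonal (fun i => f (e i)) * W := by
  ext i j
  have h' : W i j * d j = e i * W i j := by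
    have := congrFun (congrFun (congrArg (fun M => (M : Matrix (Fin n) (Fin n) ℝ)) h) i) j
    simpa [Matrix.mul_diagonal, Matrix.diagonal_mul] using this
  rw [Matrix.mul_diagonal, Matrix.diagonal_mul]
  by_cases hw : W i j = 0
  · simp [hw]
  · have hde : d j = e i := by
      have : W i j * d j = W i j * e i := by rw [h']; ring
      exact mul_left_cancel₀ hw this
    rw [hde]; ring

/-- Well-definedness of the spectral functional calculus. -/
lemma matFun_conj (f : ℝ → ℝ) {U : Matrix (Fin n) (Fin n) ℝ}
    (hU : U ∈ Matrix.unitaryGroup (Fin n) ℝ) (d : Fin n → ℝ) :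
    matFun f (U * Matrix.diagonal d * star U) =
      U * Matrix.diagonal (fun i => f (d i)) * star U := by
  have hsU : star U * U = 1 := Matrix.mem_unitaryGroup_iff'.mp hU
  have hUs : U * star U = 1 := Matrix.mem_unitaryGroup_iff.mp hU
  have hA : (U * Matrix.diagonal d * star U).IsHermitian := by
    rw [Matrix.star_eq_conjTranspose]
    exact Matrix.isHermitian_mul_mul_conjTranspose U (Matrix.isHermitian_diagonal d)
  rw [matFun_eq hA]
  set V : Matrix (Fin n) (Fin n) ℝ := (hA.eigenvectorUnitary : Matrix (Fin n) (Fin n) ℝ) with hV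
  have hsV : star V * V = 1 := Matrix.mem_unitaryGroup_iff'.mp hA.eigenvectorUnitary.2
  have hVs : V * star V = 1 := Matrix.mem_unitaryGroup_iff.mp hA.eigenvectorUnitary.2
  have hspec : U * Matrix.diagonal d * star U =
      V * Matrix.diagonal (fun i => hA.eigenvalues i) * star V := spectral' hA
  set W : Matrix (Fin n) (Fin n) ℝ := star V * U with hW
  have hsw : star W = star U * V := by
    rw [hW, Matrix.star_mul, star_star]
  have hWs : W * star W = 1 := by
    calc W * star W = star V * (U * star U) * V := by
          rw [hW, hsw]; simp only [mul_assoc]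
      _ = star V * V := by rw [hUs]; simp [mul_assoc]
      _ = 1 := hsV
  have hsW : star W * W = 1 := by
    calc star W * W = star U * (V * star V) * U := by
          rw [hW, hsw]; simp only [mul_assoc]
      _ = star U * U := by rw [hVs]; simp [mul_assoc]
      _ = 1 := hsU
  have hcomm : W * Matrix.diagonal d = Matrix.diagonal (fun i => hA.eigenvalues i) * W := by
    have h1 : W * Matrix.diagonal d * star W =
        Matrix.diagonal (fun i => hA.eigenvalues i) := by
      calc W * Matrix.diagonal d * star W
          = star V * (U * Matrix.diagonal d * star U) * V := by
            rw [hW, hsw]; simp only [mul_assoc]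
        _ = star V * (V * Matrix.diagonal (fun i => hA.eigenvalues i) * star V) * V :=
            congrArg (fun M => star V * M * V) hspec
        _ = (star V * V) * Matrix.diagonal (fun i => hA.eigenvalues i) * (star V * V) := by
            simp only [mul_assoc]
        _ = Matrix.diagonal (fun i => hA.eigenvalues i) := by rw [hsV]; simp
    calc W * Matrix.diagonal d = W * Matrix.diagonal d * (star W * W) := by rw [hsW]; simp
      _ = (W * Matrix.diagonal d * star W) * W := by simp only [mul_assoc]
      _ = Matrix.diagonal (fun i => hA.eigenvalues i) * W :=
            congrArg (fun M => M * W) h1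
  have hcommf := diag_comm hcomm f
  have hVW : V * W = U := by
    calc V * W = (V * star V) * U := by rw [hW]; simp only [mul_assoc]
      _ = U := by rw [hVs]; simp
  have hWV : star W * star V = star U := by
    have h2 := Matrix.star_mul V W
    rw [hVW] at h2
    exact h2.symm
  calc V * Matrix.diagonal (fun i => f (hA.eigenvalues i)) * star V
      = V * (Matrix.diagonal (fun i => f (hA.eigenvalues i)) * (W * star W)) * star V := by
        rw [hWs]; simp
    _ = V * ((Matrix.diagonal (fun i => f (hA.eigenvalues i)) * W) * star W) * star V := by
        simp only [mul_assoc]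
    _ = V * ((W * Matrix.diagonal (fun i => f (d i))) * star W) * star V :=
        congrArg (fun M => V * (M * star W) * star V) hcommf.symm
    _ = (V * W) * Matrix.diagonal (fun i => f (d i)) * (star W * star V) := by
        simp only [mul_assoc]
    _ = U * Matrix.diagonal (fun i => f (d i)) * star U := by
        rw [hVW, hWV]

lemma matFun_isHermitian (f : ℝ → ℝ) (A : Matrix (Fin n) (Fin n) ℝ) :
    (matFun f A).IsHermitian := by
  rw [matFun]
  split_ifs with h
  · rw [Matrix.star_eq_conjTranspose]
    exact Matrix.isHermitian_mul_mul_conjTranspose _ (Matrix.isHermitian_diagonal _)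
  · simp [Matrix.IsHermitian]

lemma posDef_conj {A C : Matrix (Fin n) (Fin n) ℝ} (hA : A.PosDef) (hC : IsUnit C.det) :
    (C * A * Cᴴ).PosDef := by
  refine Matrix.PosDef.of_dotProduct_mulVec_pos (Matrix.isHermitian_mul_mul_conjTranspose C hA.isHermitian) fun x hx => ?_
  have hCH : IsUnit (Cᴴ : Matrix (Fin n) (Fin n) ℝ) := by
    rw [Matrix.isUnit_iff_isUnit_det, Matrix.det_conjTranspose]
    exact hC.star
  have hx' : Cᴴ *ᵥ x ≠ 0 := by
    intro h0
    apply hx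
    apply Matrix.mulVec_injective_iff_isUnit.mpr hCH
    rw [h0, Matrix.mulVec_zero]
  have h2 := hA.dotProduct_mulVec_pos hx'
  rw [show C * A * Cᴴ = (Cᴴ)ᴴ * A * Cᴴ by rw [Matrix.conjTranspose_conjTranspose]]
  simpa only [Matrix.star_mulVec, Matrix.dotProduct_mulVec, Matrix.vecMul_vecMul] using h2


open NormedSpace in
lemma exp_cont : Continuous (fun H : Matrix (Fin n) (Fin n) ℝ => exp H) := by
  letI : SeminormedRing (Matrix (Fin n) (Fin n) ℝ) := Matrix.linftyOpSemiNormedRing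
  letI : NormedRing (Matrix (Fin n) (Fin n) ℝ) := Matrix.linftyOpNormedRing
  letI : NormedAlgebra ℝ (Matrix (Fin n) (Fin n) ℝ) := Matrix.linftyOpNormedAlgebra
  letI : NormedAlgebra ℚ (Matrix (Fin n) (Fin n) ℝ) := Matrix.linftyOpNormedAlgebra (R := ℚ)
  exact exp_continuous

open NormedSpace in
lemma exp_unitary_diag {U : Matrix (Fin n) (Fin n) ℝ}
    (hU : U ∈ Matrix.unitaryGroup (Fin n) ℝ) (d : Fin n → ℝ) :
    exp (U * Matrix.diagonal d * star U) =
      U * Matrix.diagonal (fun i => Real.exp (d i)) * star U := by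
  have hsU : star U * U = 1 := Matrix.mem_unitaryGroup_iff'.mp hU
  have hUs : U * star U = 1 := Matrix.mem_unitaryGroup_iff.mp hU
  have hUinv : U⁻¹ = star U := Matrix.inv_eq_left_inv hsU
  have hUnit : IsUnit U := ⟨⟨U, star U, hUs, hsU⟩, rfl⟩
  rw [← hUinv, Matrix.exp_conj U _ hUnit, Matrix.exp_diagonal, hUinv]
  have he : NormedSpace.exp d = fun i => Real.exp (d i) := by
    funext i
    rw [Pi.coe_exp, ← Real.exp_eq_exp_ℝ]
  rw [he]

open NormedSpace in
lemma exp_matLog {M : Matrix (Fin n) (Fin n) ℝ} (hM : M.PosDef) :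
    exp (matLog M) = M := by
  have h := hM.isHermitian
  rw [matLog, matFun_eq h, exp_unitary_diag h.eigenvectorUnitary.2]
  conv_rhs => rw [spectral' h]
  have he : (fun i => Real.exp (Real.log (h.eigenvalues i))) = fun i => h.eigenvalues i :=
    funext fun i => Real.exp_log (hM.eigenvalues_pos i)
  rw [he]

open NormedSpace in
lemma matLog_exp {H : Matrix (Fin n) (Fin n) ℝ} (hH : H.IsHermitian) :
    matLog (exp H) = H := by
  have h1 : exp H = (hH.eigenvectorUnitary : Matrix (Fin n) (Fin n) ℝ) *
      Matrix.diagonal (fun i => Real.exp (hH.eigenvalues i)) *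
      star (hH.eigenvectorUnitary : Matrix (Fin n) (Fin n) ℝ) := by
    conv_lhs => rw [spectral' hH]
    rw [exp_unitary_diag hH.eigenvectorUnitary.2]
  rw [matLog, h1, matFun_conj Real.log hH.eigenvectorUnitary.2]
  conv_rhs => rw [spectral' hH]
  have he : (fun i => Real.log (Real.exp (hH.eigenvalues i))) = fun i => hH.eigenvalues i :=
    funext fun i => Real.log_exp _
  rw [he]

lemma posDef_unitary_diag {U : Matrix (Fin n) (Fin n) ℝ}
    (hU : U ∈ Matrix.unitaryGroup (Fin n) ℝ) {d : Fin n → ℝ} (hd : ∀ i, 0 < d i) :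
    (U * Matrix.diagonal d * star U).PosDef := by
  rw [Matrix.star_eq_conjTranspose]
  have hDet : IsUnit U.det := (Matrix.isUnit_iff_isUnit_det U).mp
    ⟨⟨U, star U, Matrix.mem_unitaryGroup_iff.mp hU, Matrix.mem_unitaryGroup_iff'.mp hU⟩, rfl⟩
  exact posDef_conj (Matrix.posDef_diagonal_iff.mpr hd) hDet

open NormedSpace in
lemma posDef_exp {H : Matrix (Fin n) (Fin n) ℝ} (hH : H.IsHermitian) :
    (exp H).PosDef := by
  have h1 : exp H = (hH.eigenvectorUnitary : Matrix (Fin n) (Fin n) ℝ) *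
      Matrix.diagonal (fun i => Real.exp (hH.eigenvalues i)) *
      star (hH.eigenvectorUnitary : Matrix (Fin n) (Fin n) ℝ) := by
    conv_lhs => rw [spectral' hH]
    rw [exp_unitary_diag hH.eigenvectorUnitary.2]
  rw [h1]
  exact posDef_unitary_diag hH.eigenvectorUnitary.2 (fun i => Real.exp_pos _)

lemma matSqrt_posDef {A : Matrix (Fin n) (Fin n) ℝ} (hA : A.PosDef) :
    (matSqrt A).PosDef := by
  rw [matSqrt, matFun_eq hA.isHermitian]
  exact posDef_unitary_diag hA.isHermitian.eigenvectorUnitary.2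
    (fun i => Real.sqrt_pos.mpr (hA.eigenvalues_pos i))

lemma frob_continuous : Continuous (frob : Matrix (Fin n) (Fin n) ℝ → ℝ) := by
  apply Real.continuous_sqrt.comp
  apply continuous_finset_sum
  intro i _
  apply continuous_finset_sum
  intro j _
  exact ((continuous_apply j).comp (continuous_apply i)).pow 2

end FRaux

open NormedSpace

theorem fr_optimistic_likelihood_attained (Sh S : Matrix (Fin n) (Fin n) ℝ) (ρ : ℝ)
    (hρ : 0 ≤ ρ) (hSh : Sh.PosDef) (hS : S.PosSemidef) :
    ∃ Sigs : Matrix (Fin n) (Fin n) ℝ,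
      (Sigs.PosDef ∧ FRdist Sigs Sh ≤ ρ) ∧
      ∀ Sig : Matrix (Fin n) (Fin n) ℝ, Sig.PosDef → FRdist Sig Sh ≤ ρ →
        (S * Sigs⁻¹).trace + Real.log Sigs.det ≤ (S * Sig⁻¹).trace + Real.log Sig.det := by
  classical
  set P : Matrix (Fin n) (Fin n) ℝ := matSqrt Sh with hPdef
  have hP : P.PosDef := FRaux.matSqrt_posDef hSh
  have hPdetU : IsUnit P.det := isUnit_iff_ne_zero.mpr hP.det_pos.ne'
  have hPH : Pᴴ = P := hP.isHermitian
  have hPinvH : (P⁻¹)ᴴ = P⁻¹ := by rw [Matrix.conjTranspose_nonsing_inv, hPH]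
  have hPinvDetU : IsUnit (P⁻¹).det := isUnit_iff_ne_zero.mpr hP.inv.det_pos.ne'
  have hPP : P * P⁻¹ = 1 := Matrix.mul_nonsing_inv _ hPdetU
  have hPP' : P⁻¹ * P = 1 := Matrix.nonsing_inv_mul _ hPdetU
  have hs2 : (0:ℝ) < Real.sqrt 2 := Real.sqrt_pos.mpr (by norm_num)
  set c : ℝ := Real.sqrt 2 * ρ with hc
  have hc0 : 0 ≤ c := mul_nonneg hs2.le hρ
  set K : Set (Matrix (Fin n) (Fin n) ℝ) := {H | H.IsHermitian ∧ frob H ≤ c} with hKdef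
  -- K is compact
  have hKclosed : IsClosed K := by
    apply IsClosed.inter
    · exact isClosed_eq (Continuous.matrix_conjTranspose continuous_id) continuous_id
    · exact isClosed_le FRaux.frob_continuous continuous_const
  have hsub : K ⊆ Set.univ.pi (fun _ : Fin n => Set.univ.pi fun _ : Fin n => Set.Icc (-c) c) := by
    rintro H ⟨-, hfr⟩
    rw [frob] at hfr
    have h0 : (0:ℝ) ≤ ∑ i', ∑ j', (H i' j') ^ 2 := by positivity
    have hsum : ∑ i', ∑ j', (H i' j') ^ 2 ≤ c ^ 2 := by
      nlinarith [Real.sq_sqrt h0, Real.sqrt_nonneg (∑ i', ∑ j', (H i' j') ^ 2)]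
    refine Set.mem_univ_pi.mpr ?_
    intro i
    rw [Set.mem_univ_pi]
    intro j
    have h1 : ∑ j', (H i j') ^ 2 ≤ ∑ i', ∑ j', (H i' j') ^ 2 :=
      Finset.single_le_sum (f := fun i' => ∑ j', (H i' j') ^ 2)
        (fun i' _ => by positivity) (Finset.mem_univ i)
    have h2 : (H i j) ^ 2 ≤ ∑ j', (H i j') ^ 2 :=
      Finset.single_le_sum (f := fun j' => (H i j') ^ 2)
        (fun j' _ => by positivity) (Finset.mem_univ j)
    have h3 : (H i j) ^ 2 ≤ c ^ 2 := by linarith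
    constructor
    · nlinarith
    · nlinarith
  have hKcompact : IsCompact K :=
    IsCompact.of_isClosed_subset
      (isCompact_univ_pi fun _ => isCompact_univ_pi fun _ => isCompact_Icc) hKclosed hsub
  have hK0 : (0 : Matrix (Fin n) (Fin n) ℝ) ∈ K := by
    refine ⟨by simp [Matrix.IsHermitian], ?_⟩
    have : frob (0 : Matrix (Fin n) (Fin n) ℝ) = 0 := by
      rw [frob]
      simp
    rw [this]
    exact hc0
  -- the objective as a function of H
  set g : Matrix (Fin n) (Fin n) ℝ → ℝ := fun H =>
    (S * (P * exp H * P)⁻¹).trace + Real.log (P * exp H * P).det with hgdef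
  have hΦPD : ∀ H : Matrix (Fin n) (Fin n) ℝ, H.IsHermitian → (P * exp H * P).PosDef := by
    intro H hH
    have hE : (exp H).PosDef := FRaux.posDef_exp hH
    have := FRaux.posDef_conj hE hPdetU
    rwa [hPH] at this
  have hinv : ∀ H : Matrix (Fin n) (Fin n) ℝ,
      (P * exp H * P)⁻¹ = P⁻¹ * exp (-H) * P⁻¹ := by
    intro H
    rw [Matrix.mul_inv_rev, Matrix.mul_inv_rev, Matrix.exp_neg, mul_assoc]
  have hgc : ContinuousOn g K := by
    apply ContinuousOn.add
    · have h1 : Continuous fun H : Matrix (Fin n) (Fin n) ℝ =>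
          (S * (P⁻¹ * exp (-H) * P⁻¹)).trace :=
        (continuous_const.matrix_mul (((continuous_const.matrix_mul
          ((FRaux.exp_cont).comp continuous_neg)).matrix_mul continuous_const))).matrix_trace
      simp only [hgdef, hinv]
      exact h1.continuousOn
    · have h2 : Continuous fun H : Matrix (Fin n) (Fin n) ℝ => (P * exp H * P).det :=
        ((continuous_const.matrix_mul FRaux.exp_cont).matrix_mul continuous_const).matrix_det
      apply Real.continuousOn_log.comp h2.continuousOn
      intro H hH
      exact (hΦPD H hH.1).det_pos.ne'
  obtain ⟨H0, hH0K, hmin⟩ := hKcompact.exists_isMinOn ⟨0, hK0⟩ hgc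
  have hred : ∀ H : Matrix (Fin n) (Fin n) ℝ, P⁻¹ * (P * exp H * P) * P⁻¹ = exp H := by
    intro H
    simp only [mul_assoc]
    rw [hPP, mul_one, ← mul_assoc, hPP', one_mul]
  refine ⟨P * exp H0 * P, ⟨hΦPD H0 hH0K.1, ?_⟩, ?_⟩
  · have h4 : FRdist (P * exp H0 * P) Sh = (1 / Real.sqrt 2) * frob H0 := by
      rw [FRdist, ← hPdef, hred, FRaux.matLog_exp hH0K.1]
    rw [h4]
    have h5 : frob H0 ≤ Real.sqrt 2 * ρ := hH0K.2
    calc (1 / Real.sqrt 2) * frob H0 ≤ (1 / Real.sqrt 2) * (Real.sqrt 2 * ρ) := by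
          apply mul_le_mul_of_nonneg_left h5 (by positivity)
      _ = ρ := by field_simp
  · intro Sig hSig hdist
    rw [FRdist, ← hPdef] at hdist
    set M : Matrix (Fin n) (Fin n) ℝ := P⁻¹ * Sig * P⁻¹ with hMdef
    have hMPD : M.PosDef := by
      have h1 := FRaux.posDef_conj hSig hPinvDetU
      rwa [hPinvH] at h1
    set H : Matrix (Fin n) (Fin n) ℝ := matLog M with hHdef
    have hHK : H ∈ K := by
      refine ⟨FRaux.matFun_isHermitian _ _, ?_⟩
      calc frob H = Real.sqrt 2 * ((1 / Real.sqrt 2) * frob H) := by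
            field_simp
        _ ≤ Real.sqrt 2 * ρ := mul_le_mul_of_nonneg_left hdist hs2.le
    have hΦH : P * exp H * P = Sig := by
      rw [hHdef, FRaux.exp_matLog hMPD, hMdef]
      simp only [mul_assoc]
      rw [hPP', mul_one, ← mul_assoc, hPP, one_mul]
    have hle : g H0 ≤ g H := isMinOn_iff.mp hmin H hHK
    simp only [hgdef] at hle
    rwa [hΦH] at hle
end

section
/- For any positive semidefinite matrix $S \in \mathbb{S}^n_+$, the function $\Sigma \mapsto \mathrm{Tr}(S\Sigma^{-1}) + \log\det\Sigma$ is geodesically convex on $\mathbb{S}^n_{++}$: for all $\Sigma_0,\Sigma_1 \in \mathbb{S}^n_{++}$ and $t \in [0,1]$, with $\gamma(t) = \Sigma_0^{1/2}(\Sigma_0^{-1/2}\Sigma_1\Sigma_0^{-1/2})^t\Sigma_0^{1/2}$, one has $\mathrm{Tr}(S\gamma(t)^{-1}) + \log\det\gamma(t) \le (1-t)\big(\mathrm{Tr}(S\Sigma_0^{-1}) + \log\det\Sigma_0\big) + t\big(\mathrm{Tr}(S\Sigma_1^{-1}) + \log\det\Sigma_1\big)$. -/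
open Matrix

variable {n : ℕ}

/- ### Auxiliary lemmas -/

lemma matFun_of_isHermitian (f : ℝ → ℝ) {A : Matrix (Fin n) (Fin n) ℝ} (hA : A.IsHermitian) :
    matFun f A = (hA.eigenvectorUnitary : Matrix (Fin n) (Fin n) ℝ) *
      Matrix.diagonal (fun i => f (hA.eigenvalues i)) *
      star (hA.eigenvectorUnitary : Matrix (Fin n) (Fin n) ℝ) :=
  dif_pos hA

lemma matSqrt_psd_sq {A : Matrix (Fin n) (Fin n) ℝ} (hA : A.PosSemidef) :
    (matSqrt A).PosSemidef ∧ matSqrt A * matSqrt A = A := by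
  have hU1 : star (hA.1.eigenvectorUnitary : Matrix (Fin n) (Fin n) ℝ) *
      (hA.1.eigenvectorUnitary : Matrix (Fin n) (Fin n) ℝ) = 1 :=
    Matrix.mem_unitaryGroup_iff'.mp hA.1.eigenvectorUnitary.2
  have hsp := hA.1.spectral_theorem
  rw [RCLike.ofReal_real_eq_id, Function.id_comp] at hsp
  rw [matSqrt, matFun_of_isHermitian Real.sqrt hA.1]
  constructor
  · have hD : (Matrix.diagonal fun i => Real.sqrt (hA.1.eigenvalues i)).PosSemidef :=
      Matrix.PosSemidef.diagonal (fun i => Real.sqrt_nonneg _)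
    have := hD.mul_mul_conjTranspose_same
      (hA.1.eigenvectorUnitary : Matrix (Fin n) (Fin n) ℝ)
    rwa [← Matrix.star_eq_conjTranspose] at this
  · simp only [Matrix.mul_assoc]
    rw [← Matrix.mul_assoc (star _) _ (_ * star _), hU1, Matrix.one_mul,
      ← Matrix.mul_assoc (Matrix.diagonal _) (Matrix.diagonal _), Matrix.diagonal_mul_diagonal]
    have he : ∀ i, Real.sqrt (hA.1.eigenvalues i) * Real.sqrt (hA.1.eigenvalues i)
        = hA.1.eigenvalues i := fun i => Real.mul_self_sqrt (hA.eigenvalues_nonneg i)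
    simp only [he]
    rw [← Matrix.mul_assoc]
    exact hsp.symm

lemma trace_mul_diagonal' (A : Matrix (Fin n) (Fin n) ℝ) (w : Fin n → ℝ) :
    (A * Matrix.diagonal w).trace = ∑ i, A i i * w i := by
  simp [Matrix.trace, Matrix.diag, Matrix.mul_diagonal]

lemma aux_trace (S R V : Matrix (Fin n) (Fin n) ℝ) (w : Fin n → ℝ) :
    (S * (R⁻¹ * (V * Matrix.diagonal w * star V) * R⁻¹)).trace
      = ∑ i, (star V * (R⁻¹ * S * R⁻¹) * V) i i * w i := by
  have h1 : S * (R⁻¹ * (V * Matrix.diagonal w * star V) * R⁻¹)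
      = (S * R⁻¹ * V * Matrix.diagonal w) * (star V * R⁻¹) := by
    simp only [Matrix.mul_assoc]
  have h2 : (star V * R⁻¹) * (S * R⁻¹ * V * Matrix.diagonal w)
      = (star V * (R⁻¹ * S * R⁻¹) * V) * Matrix.diagonal w := by
    simp only [Matrix.mul_assoc]
  rw [h1, Matrix.trace_mul_comm, h2, trace_mul_diagonal']

lemma aux_inv (R V : Matrix (Fin n) (Fin n) ℝ) (u : Fin n → ℝ)
    (hR1 : R * R⁻¹ = 1) (hR2 : R⁻¹ * R = 1)
    (hV1 : V * star V = 1) (hV2 : star V * V = 1)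
    (hu : ∀ i, u i ≠ 0) :
    (R * (V * Matrix.diagonal u * star V) * R)⁻¹
      = R⁻¹ * (V * Matrix.diagonal (fun i => (u i)⁻¹) * star V) * R⁻¹ := by
  apply Matrix.inv_eq_right_inv
  have hd : Matrix.diagonal u * Matrix.diagonal (fun i => (u i)⁻¹) = 1 := by
    rw [Matrix.diagonal_mul_diagonal]
    convert Matrix.diagonal_one using 2
    exact funext fun i => mul_inv_cancel₀ (hu i)
  have c1 : ∀ X : Matrix (Fin n) (Fin n) ℝ, R * (R⁻¹ * X) = X := fun X => by
    rw [← Matrix.mul_assoc, hR1, Matrix.one_mul]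
  have c2 : ∀ X : Matrix (Fin n) (Fin n) ℝ, star V * (V * X) = X := fun X => by
    rw [← Matrix.mul_assoc, hV2, Matrix.one_mul]
  have c3 : ∀ X : Matrix (Fin n) (Fin n) ℝ,
      Matrix.diagonal u * (Matrix.diagonal (fun i => (u i)⁻¹) * X) = X := fun X => by
    rw [← Matrix.mul_assoc, hd, Matrix.one_mul]
  have c4 : ∀ X : Matrix (Fin n) (Fin n) ℝ, V * (star V * X) = X := fun X => by
    rw [← Matrix.mul_assoc, hV1, Matrix.one_mul]
  simp only [Matrix.mul_assoc]
  rw [c1, c2, c3, c4]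
  exact hR1

lemma aux_det (R V : Matrix (Fin n) (Fin n) ℝ) (u : Fin n → ℝ)
    (hV1 : V * star V = 1) :
    (R * (V * Matrix.diagonal u * star V) * R).det = R.det * R.det * ∏ i, u i := by
  have hVdet : V.det * (star V).det = 1 := by
    rw [← Matrix.det_mul, hV1, Matrix.det_one]
  have : (R * (V * Matrix.diagonal u * star V) * R).det
      = R.det * (V.det * (Matrix.diagonal u).det * (star V).det) * R.det := by
    simp [Matrix.det_mul]
  rw [this, Matrix.det_diagonal]
  calc R.det * (V.det * (∏ i, u i) * (star V).det) * R.det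
      = R.det * R.det * (∏ i, u i) * (V.det * (star V).det) := by ring
    _ = R.det * R.det * ∏ i, u i := by rw [hVdet, mul_one]

theorem geodesic_convexity_L (S S0 S1 : Matrix (Fin n) (Fin n) ℝ)
    (hS : S.PosSemidef) (h0 : S0.PosDef) (h1 : S1.PosDef) (t : ℝ)
    (ht0 : 0 ≤ t) (ht1 : t ≤ 1) :
    (S * (matSqrt S0 * matPow ((matSqrt S0)⁻¹ * S1 * (matSqrt S0)⁻¹) t * matSqrt S0)⁻¹).trace
      + Real.log (matSqrt S0 * matPow ((matSqrt S0)⁻¹ * S1 * (matSqrt S0)⁻¹) t * matSqrt S0).det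
    ≤ (1 - t) * ((S * S0⁻¹).trace + Real.log S0.det)
      + t * ((S * S1⁻¹).trace + Real.log S1.det) := by
  classical
  have hS0 := h0.posSemidef
  set R : Matrix (Fin n) (Fin n) ℝ := matSqrt S0 with hRdef
  have hReq := matSqrt_psd_sq hS0
  have hRpsd : R.PosSemidef := hReq.1
  have hRherm : Rᴴ = R := hRpsd.1
  have hRR : R * R = S0 := hReq.2
  have hdetS0 : 0 < S0.det := h0.det_pos
  have hdetS0' : S0.det = R.det * R.det := by rw [← hRR, Matrix.det_mul]
  have hdetR : R.det ≠ 0 := by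
    intro h
    rw [hdetS0', h, mul_zero] at hdetS0
    exact lt_irrefl _ hdetS0
  have hRunit : IsUnit R.det := isUnit_iff_ne_zero.mpr hdetR
  have hRinv : R * R⁻¹ = 1 := Matrix.mul_nonsing_inv R hRunit
  have hRinv' : R⁻¹ * R = 1 := Matrix.nonsing_inv_mul R hRunit
  have hRiherm : (R⁻¹)ᴴ = R⁻¹ := by rw [Matrix.conjTranspose_nonsing_inv, hRherm]
  set M : Matrix (Fin n) (Fin n) ℝ := R⁻¹ * S1 * R⁻¹ with hMdef
  have hMpsd : M.PosSemidef := by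
    have := h1.posSemidef.conjTranspose_mul_mul_same R⁻¹
    rwa [hRiherm] at this
  have hM : M.IsHermitian := hMpsd.1
  set V : Matrix (Fin n) (Fin n) ℝ := (hM.eigenvectorUnitary : Matrix (Fin n) (Fin n) ℝ)
    with hVdef
  set d : Fin n → ℝ := hM.eigenvalues with hddef
  have hVV : V * star V = 1 := Matrix.mem_unitaryGroup_iff.mp hM.eigenvectorUnitary.2
  have hVV' : star V * V = 1 := Matrix.mem_unitaryGroup_iff'.mp hM.eigenvectorUnitary.2
  have hspec : M = V * Matrix.diagonal d * star V := by
    have := hM.spectral_theorem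
    rwa [RCLike.ofReal_real_eq_id, Function.id_comp] at this
  -- positivity of eigenvalues
  have hdRinv : R⁻¹.det ≠ 0 := by
    have h : R⁻¹.det * R.det = 1 := by rw [← Matrix.det_mul, hRinv', Matrix.det_one]
    exact left_ne_zero_of_mul_eq_one h
  have hdM : M.det = S1.det * R⁻¹.det ^ 2 := by
    rw [hMdef, Matrix.det_mul, Matrix.det_mul]; ring
  have hdetM : 0 < M.det := by
    rw [hdM]
    exact mul_pos h1.det_pos (lt_of_le_of_ne (sq_nonneg _) (Ne.symm (pow_ne_zero 2 hdRinv)))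
  have hprod : ∏ i, d i = M.det := by
    have := hM.det_eq_prod_eigenvalues
    simpa using this.symm
  have hdpos : ∀ i, 0 < d i := by
    intro i
    rcases (hMpsd.eigenvalues_nonneg i).lt_or_eq with h | h
    · exact h
    · exfalso
      have hz : ∏ j, d j = 0 := Finset.prod_eq_zero (Finset.mem_univ i) h.symm
      rw [hprod] at hz
      exact hdetM.ne' hz
  -- the three congruence forms
  have hS0form : S0 = R * (V * Matrix.diagonal (fun _ : Fin n => (1 : ℝ)) * star V) * R := by
    rw [show Matrix.diagonal (fun _ : Fin n => (1 : ℝ)) = 1 from Matrix.diagonal_one,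
      Matrix.mul_one, hVV, Matrix.mul_one, hRR]
  have hS1form : S1 = R * (V * Matrix.diagonal d * star V) * R := by
    rw [← hspec, hMdef]
    simp only [Matrix.mul_assoc]
    rw [hRinv', Matrix.mul_one, ← Matrix.mul_assoc, hRinv, Matrix.one_mul]
  have hpow : matPow M t = V * Matrix.diagonal (fun i => d i ^ t) * star V :=
    matFun_of_isHermitian _ hM
  set G : Matrix (Fin n) (Fin n) ℝ := R * matPow M t * R with hGdef
  have hGform : G = R * (V * Matrix.diagonal (fun i => d i ^ t) * star V) * R := by
    rw [hGdef, hpow]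
  -- inverses
  have hS0inv : S0⁻¹ = R⁻¹ * (V * Matrix.diagonal (fun _ : Fin n => ((1:ℝ))⁻¹) * star V) * R⁻¹ := by
    rw [hS0form]
    exact aux_inv R V _ hRinv hRinv' hVV hVV' (fun i => one_ne_zero)
  have hS1inv : S1⁻¹ = R⁻¹ * (V * Matrix.diagonal (fun i => (d i)⁻¹) * star V) * R⁻¹ := by
    rw [hS1form]
    exact aux_inv R V _ hRinv hRinv' hVV hVV' (fun i => (hdpos i).ne')
  have hGinv : G⁻¹ = R⁻¹ * (V * Matrix.diagonal (fun i => (d i ^ t)⁻¹) * star V) * R⁻¹ := by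
    rw [hGform]
    exact aux_inv R V _ hRinv hRinv' hVV hVV' (fun i => (Real.rpow_pos_of_pos (hdpos i) t).ne')
  -- traces
  set Q : Matrix (Fin n) (Fin n) ℝ := star V * (R⁻¹ * S * R⁻¹) * V with hQdef
  have hPpsd : (R⁻¹ * S * R⁻¹).PosSemidef := by
    have := hS.conjTranspose_mul_mul_same R⁻¹
    rwa [hRiherm] at this
  have hQpsd : Q.PosSemidef := by
    have := hPpsd.conjTranspose_mul_mul_same V
    rwa [← Matrix.star_eq_conjTranspose] at this
  have hQd : ∀ i, 0 ≤ Q i i := by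
    intro i
    exact hQpsd.diag_nonneg
  have htr0 : (S * S0⁻¹).trace = ∑ i, Q i i := by
    rw [hS0inv, aux_trace]
    simp [hQdef]
  have htr1 : (S * S1⁻¹).trace = ∑ i, Q i i * (d i)⁻¹ := by
    rw [hS1inv, aux_trace]
  have htrG : (S * G⁻¹).trace = ∑ i, Q i i * (d i ^ t)⁻¹ := by
    rw [hGinv, aux_trace]
  -- determinants
  have hlogS1 : Real.log S1.det = Real.log S0.det + ∑ i, Real.log (d i) := by
    rw [hS1form, aux_det R V d hVV, ← hdetS0',
      Real.log_mul hdetS0.ne' (Finset.prod_ne_zero_iff.mpr fun i _ => (hdpos i).ne'),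
      Real.log_prod fun i _ => (hdpos i).ne']
  have hlogG : Real.log G.det = Real.log S0.det + t * ∑ i, Real.log (d i) := by
    rw [hGform, aux_det R V _ hVV, ← hdetS0',
      Real.log_mul hdetS0.ne'
        (Finset.prod_ne_zero_iff.mpr fun i _ => (Real.rpow_pos_of_pos (hdpos i) t).ne'),
      Real.log_prod fun i _ => (Real.rpow_pos_of_pos (hdpos i) t).ne']
    rw [Finset.mul_sum]
    congr 1
    exact Finset.sum_congr rfl fun i _ => Real.log_rpow (hdpos i) t
  -- the scalar inequality
  have key : ∀ i, Q i i * (d i ^ t)⁻¹ ≤ (1 - t) * Q i i + t * (Q i i * (d i)⁻¹) := by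
    intro i
    have hd := hdpos i
    have amgm : ((d i)⁻¹) ^ t ≤ (1 - t) + t * (d i)⁻¹ := by
      have h := Real.geom_mean_le_arith_mean2_weighted (by linarith : (0:ℝ) ≤ 1 - t) ht0
        zero_le_one (inv_nonneg.mpr hd.le) (by ring)
      simpa using h
    have hrw : (d i ^ t)⁻¹ = ((d i)⁻¹) ^ t := (Real.inv_rpow hd.le t).symm
    rw [hrw]
    calc Q i i * ((d i)⁻¹) ^ t ≤ Q i i * ((1 - t) + t * (d i)⁻¹) :=
          mul_le_mul_of_nonneg_left amgm (hQd i)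
      _ = (1 - t) * Q i i + t * (Q i i * (d i)⁻¹) := by ring
  have sum_key : ∑ i, Q i i * (d i ^ t)⁻¹
      ≤ (1 - t) * (∑ i, Q i i) + t * ∑ i, Q i i * (d i)⁻¹ := by
    rw [Finset.mul_sum, Finset.mul_sum, ← Finset.sum_add_distrib]
    exact Finset.sum_le_sum fun i _ => key i
  rw [htrG, hlogG, htr0, htr1, hlogS1]
  nlinarith [sum_key]
end

section
/- Let $\Sigma \in \mathbb{S}^n_{++}$, $S \in \mathbb{S}^n_+$, and let $V \in \mathbb{S}^n$ satisfy $\frac{1}{2}\mathrm{Tr}(\Sigma^{-1}V\Sigma^{-1}V) = 1$. Then $0 \le \mathrm{Tr}(\Sigma^{-1}S\Sigma^{-1}V\Sigma^{-1}V) \le 2\lambda_{\max}(S)/\lambda_{\min}(\Sigma)$, and if moreover $S \succ 0$ then $\mathrm{Tr}(\Sigma^{-1}S\Sigma^{-1}V\Sigma^{-1}V) \ge 2\lambda_{\min}(S)/\lambda_{\max}(\Sigma)$. -/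
open Matrix

variable {n : ℕ}

lemma myTrace_nonneg {A : Matrix (Fin n) (Fin n) ℝ} (hA : A.PosSemidef) : 0 ≤ A.trace := by
  rw [Matrix.trace]
  apply Finset.sum_nonneg
  intro i _
  have := hA.dotProduct_mulVec_nonneg (Pi.single i 1)
  simpa [Matrix.mulVec_single, dotProduct, Pi.single_apply, Finset.sum_ite_eq] using this

lemma myTraceMul_nonneg {A B : Matrix (Fin n) (Fin n) ℝ} (hA : A.PosSemidef) (hB : B.PosSemidef) :
    0 ≤ (A * B).trace := by
  open scoped MatrixOrder in
  obtain ⟨C, rfl⟩ := CStarAlgebra.nonneg_iff_eq_star_mul_self.mp hB.nonneg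
  rw [← Matrix.mul_assoc, Matrix.trace_mul_cycle]
  exact myTrace_nonneg (hA.mul_mul_conjTranspose_same C)

lemma smul_one_sub_posSemidef {C : Matrix (Fin n) (Fin n) ℝ} (hC : C.IsHermitian) {c : ℝ}
    (h : ∀ i, hC.eigenvalues i ≤ c) :
    (c • (1 : Matrix (Fin n) (Fin n) ℝ) - C).PosSemidef := by
  set U : Matrix (Fin n) (Fin n) ℝ := (hC.eigenvectorUnitary : Matrix (Fin n) (Fin n) ℝ)
  have hUU : U * star U = 1 := Matrix.mem_unitaryGroup_iff.mp hC.eigenvectorUnitary.2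
  have key : c • (1 : Matrix (Fin n) (Fin n) ℝ) - C =
      U * Matrix.diagonal (fun i => c - hC.eigenvalues i) * star U := by
    conv_lhs => rw [hC.spectral_theorem, Unitary.conjStarAlgAut_apply]
    have hd : Matrix.diagonal (fun i : Fin n => c - hC.eigenvalues i) =
        c • (1 : Matrix (Fin n) (Fin n) ℝ) - Matrix.diagonal (RCLike.ofReal ∘ hC.eigenvalues) := by
      ext i j
      by_cases hij : i = j <;>
        simp [hij, Matrix.one_apply, Matrix.diagonal_apply, Matrix.smul_apply]
    rw [hd, Matrix.mul_sub, Matrix.sub_mul, Matrix.mul_smul, Matrix.smul_mul, mul_one, hUU]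
  rw [key]
  exact (Matrix.posSemidef_diagonal_iff.mpr fun i => sub_nonneg.2 (h i)).mul_mul_conjTranspose_same U

lemma sub_smul_one_posSemidef {C : Matrix (Fin n) (Fin n) ℝ} (hC : C.IsHermitian) {c : ℝ}
    (h : ∀ i, c ≤ hC.eigenvalues i) :
    (C - c • (1 : Matrix (Fin n) (Fin n) ℝ)).PosSemidef := by
  set U : Matrix (Fin n) (Fin n) ℝ := (hC.eigenvectorUnitary : Matrix (Fin n) (Fin n) ℝ)
  have hUU : U * star U = 1 := Matrix.mem_unitaryGroup_iff.mp hC.eigenvectorUnitary.2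
  have key : C - c • (1 : Matrix (Fin n) (Fin n) ℝ) =
      U * Matrix.diagonal (fun i => hC.eigenvalues i - c) * star U := by
    conv_lhs => rw [hC.spectral_theorem, Unitary.conjStarAlgAut_apply]
    have hd : Matrix.diagonal (fun i : Fin n => hC.eigenvalues i - c) =
        Matrix.diagonal (RCLike.ofReal ∘ hC.eigenvalues) - c • (1 : Matrix (Fin n) (Fin n) ℝ) := by
      ext i j
      by_cases hij : i = j <;>
        simp [hij, Matrix.one_apply, Matrix.diagonal_apply, Matrix.smul_apply]
    rw [hd, Matrix.mul_sub, Matrix.sub_mul, Matrix.mul_smul, Matrix.smul_mul, mul_one, hUU]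
  rw [key]
  exact (Matrix.posSemidef_diagonal_iff.mpr fun i => sub_nonneg.2 (h i)).mul_mul_conjTranspose_same U

lemma traceMul_le {C R : Matrix (Fin n) (Fin n) ℝ} (hC : C.IsHermitian) (hR : R.PosSemidef)
    {c : ℝ} (h : ∀ i, hC.eigenvalues i ≤ c) : (C * R).trace ≤ c * R.trace := by
  have h0 := myTraceMul_nonneg (smul_one_sub_posSemidef hC h) hR
  rw [Matrix.sub_mul, Matrix.trace_sub, Matrix.smul_mul, one_mul, Matrix.trace_smul,
    smul_eq_mul] at h0
  linarith

lemma le_traceMul {C R : Matrix (Fin n) (Fin n) ℝ} (hC : C.IsHermitian) (hR : R.PosSemidef)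
    {c : ℝ} (h : ∀ i, c ≤ hC.eigenvalues i) : c * R.trace ≤ (C * R).trace := by
  have h0 := myTraceMul_nonneg (sub_smul_one_posSemidef hC h) hR
  rw [Matrix.sub_mul, Matrix.trace_sub, Matrix.smul_mul, one_mul, Matrix.trace_smul,
    smul_eq_mul] at h0
  linarith

theorem riemannian_hessian_eigen_bounds (Sig S V : Matrix (Fin n) (Fin n) ℝ)
    (hSig : Sig.PosDef) (hS : S.PosSemidef) (hV : V.IsHermitian)
    (hnorm : (1 / 2) * (Sig⁻¹ * V * Sig⁻¹ * V).trace = 1) :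
    (0 ≤ (Sig⁻¹ * S * Sig⁻¹ * V * Sig⁻¹ * V).trace ∧
     (Sig⁻¹ * S * Sig⁻¹ * V * Sig⁻¹ * V).trace
        ≤ 2 * (⨆ i, hS.1.eigenvalues i) / (⨅ i, hSig.1.eigenvalues i)) ∧
    (S.PosDef →
      2 * (⨅ i, hS.1.eigenvalues i) / (⨆ i, hSig.1.eigenvalues i)
        ≤ (Sig⁻¹ * S * Sig⁻¹ * V * Sig⁻¹ * V).trace) := by
  rcases Nat.eq_zero_or_pos n with h0 | hpos
  · exfalso
    subst h0
    have hz : (Sig⁻¹ * V * Sig⁻¹ * V).trace = 0 := by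
      simp [Matrix.trace]
    rw [hz] at hnorm
    norm_num at hnorm
  haveI : Nonempty (Fin n) := Fin.pos_iff_nonempty.mp hpos
  have hSinv : Sig⁻¹.PosDef := hSig.inv
  have hSiH : Sig⁻¹.IsHermitian := hSinv.1
  have hdet : IsUnit Sig.det := hSig.det_pos.ne'.isUnit
  set P := Sig⁻¹ * V * Sig⁻¹ * V * Sig⁻¹ with hPdef
  have hP : P.PosSemidef := by
    have h1 : P = (Sig⁻¹ * V) * Sig⁻¹ * (Sig⁻¹ * V)ᴴ := by
      rw [Matrix.conjTranspose_mul, hV.eq, hSiH.eq, hPdef]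
      simp [Matrix.mul_assoc]
    rw [h1]
    exact hSinv.posSemidef.mul_mul_conjTranspose_same _
  have hTrP0 : 0 ≤ P.trace := myTrace_nonneg hP
  have hT : (Sig⁻¹ * S * Sig⁻¹ * V * Sig⁻¹ * V).trace = (S * P).trace := by
    rw [show Sig⁻¹ * S * Sig⁻¹ * V * Sig⁻¹ * V = Sig⁻¹ * (S * Sig⁻¹ * V * Sig⁻¹ * V) by
      simp [Matrix.mul_assoc], Matrix.trace_mul_comm]
    congr 1
    simp [hPdef, Matrix.mul_assoc]
  have hSigP : (Sig * P).trace = 2 := by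
    have hmul : Sig * P = V * Sig⁻¹ * V * Sig⁻¹ := by
      rw [hPdef, show Sig * (Sig⁻¹ * V * Sig⁻¹ * V * Sig⁻¹)
          = Sig * Sig⁻¹ * (V * Sig⁻¹ * V * Sig⁻¹) by simp [Matrix.mul_assoc],
        Matrix.mul_nonsing_inv _ hdet, one_mul]
    rw [hmul, Matrix.trace_mul_comm]
    rw [show Sig⁻¹ * (V * Sig⁻¹ * V) = Sig⁻¹ * V * Sig⁻¹ * V by simp [Matrix.mul_assoc]]
    linarith
  have hbddS : ∀ i, hS.1.eigenvalues i ≤ ⨆ j, hS.1.eigenvalues j :=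
    fun i => le_ciSup (Set.Finite.bddAbove (Set.finite_range _)) i
  have hmaxS0 : 0 ≤ ⨆ j, hS.1.eigenvalues j :=
    le_trans (hS.eigenvalues_nonneg (Classical.arbitrary _)) (hbddS _)
  have hbddSig : ∀ i, (⨅ j, hSig.1.eigenvalues j) ≤ hSig.1.eigenvalues i :=
    fun i => ciInf_le (Set.Finite.bddBelow (Set.finite_range _)) i
  have hminpos : 0 < ⨅ j, hSig.1.eigenvalues j := by
    obtain ⟨i, hi⟩ := exists_eq_ciInf_of_finite (f := hSig.1.eigenvalues)
    rw [← hi]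
    exact hSig.eigenvalues_pos i
  refine ⟨⟨by rw [hT]; exact myTraceMul_nonneg hS hP, ?_⟩, ?_⟩
  · have hupper : (S * P).trace ≤ (⨆ j, hS.1.eigenvalues j) * P.trace := traceMul_le hS.1 hP hbddS
    have hlow : (⨅ j, hSig.1.eigenvalues j) * P.trace ≤ (Sig * P).trace :=
      le_traceMul hSig.1 hP hbddSig
    have h2 : (⨅ j, hSig.1.eigenvalues j) * P.trace ≤ 2 := hSigP ▸ hlow
    rw [hT, le_div_iff₀ hminpos]
    nlinarith [mul_le_mul_of_nonneg_right hupper hminpos.le,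
      mul_le_mul_of_nonneg_left h2 hmaxS0]
  · intro hSpd
    have hminS : 0 < ⨅ j, hS.1.eigenvalues j := by
      obtain ⟨i, hi⟩ := exists_eq_ciInf_of_finite (f := hS.1.eigenvalues)
      rw [← hi]
      exact hSpd.eigenvalues_pos i
    have hbddS' : ∀ i, (⨅ j, hS.1.eigenvalues j) ≤ hS.1.eigenvalues i :=
      fun i => ciInf_le (Set.Finite.bddBelow (Set.finite_range _)) i
    have hupSig : ∀ i, hSig.1.eigenvalues i ≤ ⨆ j, hSig.1.eigenvalues j :=
      fun i => le_ciSup (Set.Finite.bddAbove (Set.finite_range _)) i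
    have hmaxSig : 0 < ⨆ j, hSig.1.eigenvalues j :=
      lt_of_lt_of_le (hSig.eigenvalues_pos (Classical.arbitrary _)) (hupSig _)
    have hlow2 : (⨅ j, hS.1.eigenvalues j) * P.trace ≤ (S * P).trace :=
      le_traceMul hS.1 hP hbddS'
    have hup2 : (Sig * P).trace ≤ (⨆ j, hSig.1.eigenvalues j) * P.trace :=
      traceMul_le hSig.1 hP hupSig
    have h2 : 2 ≤ (⨆ j, hSig.1.eigenvalues j) * P.trace := hSigP ▸ hup2
    rw [hT, div_le_iff₀ hmaxSig]
    nlinarith [mul_le_mul_of_nonneg_right hlow2 hmaxSig.le,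
      mul_le_mul_of_nonneg_left h2 hminS.le]
end
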